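/- Maximum-entropy property of the thermal distribution (Jaynes' principle / Gaussian extremality for a single mode): Let n̄ > 0 and let p : ℕ → ℝ satisfy p(n) ≥ 0 for all n, ∑_{n=0}^∞ p(n) = 1, and ∑_{n=0}^∞ n·p(n) = n̄ (both series summable). Then the Shannon entropy of p satisfies −∑_{n=0}^∞ p(n)·ln p(n) ≤ s_th(n̄), where s_th(x) = (x+1)·ln(x+1) − x·ln x, with the convention 0·ln 0 = 0 (the entropy series, having nonnegative terms, is interpreted as a sum in [0,∞]). -/

import Mathlib

/-- The thermal entropy function `s_th(x) = (x+1) ln(x+1) − x ln x`. -/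
noncomputable def sTh (x : ℝ) : ℝ := (x + 1) * Real.log (x + 1) - x * Real.log x

/-- Pointwise Gibbs inequality: `-p log p ≤ -p log q + (q - p)`. -/
lemma gibbs_pt (p q : ℝ) (hp : 0 ≤ p) (hq : 0 < q) :
    -(p * Real.log p) ≤ p * (-Real.log q) + (q - p) := by
  rcases eq_or_lt_of_le hp with h0 | h0
  · simp [← h0]; linarith
  · have h1 : Real.log (q / p) ≤ q / p - 1 := Real.log_le_sub_one_of_pos (by positivity)
    have h2 : Real.log (q / p) = Real.log q - Real.log p := Real.log_div hq.ne' h0.ne'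
    have h3 : p * Real.log (q / p) ≤ p * (q / p - 1) := mul_le_mul_of_nonneg_left h1 hp
    rw [h2] at h3
    have h4 : p * (q / p - 1) = q - p := by field_simp
    nlinarith

theorem thermal_max_entropy (nbar : ℝ) (h : 0 < nbar) (p : ℕ → ℝ)
    (hp : ∀ n, 0 ≤ p n)
    (hsum : Summable p) (hnorm : ∑' n : ℕ, p n = 1)
    (hmean_sum : Summable (fun n : ℕ => (n : ℝ) * p n))
    (hmean : ∑' n : ℕ, (n : ℝ) * p n = nbar) :
    ∑' n : ℕ, ENNReal.ofReal (-(p n * Real.log (p n))) ≤ ENNReal.ofReal (sTh nbar) := by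
  have h1 : (0:ℝ) < nbar + 1 := by linarith
  set r : ℝ := nbar / (nbar + 1) with hr_def
  have hr0 : 0 < r := div_pos h h1
  have hr1 : r < 1 := (div_lt_one h1).mpr (by linarith)
  set q : ℕ → ℝ := fun n => (1 - r) * r ^ n with hq_def
  have hqpos : ∀ n, 0 < q n := fun n => mul_pos (by linarith) (pow_pos hr0 n)
  have hq_summ : Summable q := (summable_geometric_of_lt_one hr0.le hr1).mul_left _
  have hq_tsum : ∑' n, q n = 1 := by
    rw [hq_def, tsum_mul_left, tsum_geometric_of_lt_one hr0.le hr1]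
    rw [inv_eq_one_div]
    rw [mul_one_div, div_self (sub_ne_zero.mpr hr1.ne')]
  have hlogq : ∀ n : ℕ, Real.log (q n) = Real.log (1 - r) + (n : ℝ) * Real.log r := by
    intro n
    show Real.log ((1 - r) * r ^ n) = _
    rw [Real.log_mul (by linarith) (pow_ne_zero n hr0.ne'), Real.log_pow]
  set g : ℕ → ℝ := fun n =>
    (-Real.log (1 - r)) * p n + (-Real.log r) * ((n : ℝ) * p n) + (q n - p n) with hg_def
  have hg_summ : Summable g := by
    apply Summable.add
    · exact (hsum.mul_left _).add (hmean_sum.mul_left _)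
    · exact hq_summ.sub hsum
  have hfg : ∀ n, -(p n * Real.log (p n)) ≤ g n := by
    intro n
    have := gibbs_pt (p n) (q n) (hp n) (hqpos n)
    rw [hg_def]
    simp only
    rw [hlogq n] at this
    nlinarith [this]
  have hf_nonneg : ∀ n, 0 ≤ -(p n * Real.log (p n)) := by
    intro n
    have hle : p n ≤ 1 := by
      have h2 := Summable.le_tsum hsum n (fun m _ => hp m)
      rw [hnorm] at h2; exact h2
    have hlog : Real.log (p n) ≤ 0 := Real.log_nonpos (hp n) hle
    nlinarith [hp n]
  have hf_summ : Summable (fun n => -(p n * Real.log (p n))) :=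
    Summable.of_nonneg_of_le hf_nonneg hfg hg_summ
  have hg_tsum : ∑' n, g n = sTh nbar := by
    rw [hg_def]
    rw [Summable.tsum_add ((hsum.mul_left _).add (hmean_sum.mul_left _)) (hq_summ.sub hsum)]
    rw [Summable.tsum_add (hsum.mul_left _) (hmean_sum.mul_left _)]
    rw [tsum_mul_left, tsum_mul_left, Summable.tsum_sub hq_summ hsum]
    rw [hnorm, hmean, hq_tsum]
    have e1 : (1 : ℝ) - r = 1 / (nbar + 1) := by rw [hr_def]; field_simp; ring
    have e2 : Real.log (1 - r) = -Real.log (nbar + 1) := by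
      rw [e1, Real.log_div one_ne_zero h1.ne', Real.log_one]; ring
    have e3 : Real.log r = Real.log nbar - Real.log (nbar + 1) := by
      rw [hr_def, Real.log_div h.ne' h1.ne']
    rw [e2, e3, sTh]; ring
  calc ∑' n : ℕ, ENNReal.ofReal (-(p n * Real.log (p n)))
      = ENNReal.ofReal (∑' n, -(p n * Real.log (p n))) :=
        (ENNReal.ofReal_tsum_of_nonneg hf_nonneg hf_summ).symm
    _ ≤ ENNReal.ofReal (sTh nbar) := by
        apply ENNReal.ofReal_le_ofReal
        rw [← hg_tsum]
        exact Summable.tsum_le_tsum hfg hf_summ hg_summ
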